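/- arXiv:2308.16425 — 2 statements merged into one kernel-verified Lean document; each statement's English description precedes it below -/
import Mathlib

section
/- Fix σ_a ∈ ℝ with 0 < σ_a² < 1, let f(x) = (√(1−x²) + (π − arccos x)·x)/π, and fix t ∈ [−1,1]. Define the sequence (g_l) by g_0 = t and g_l = σ_a²·f(g_{l−1}) + (1−σ_a²)·t for l ≥ 1. Then g_l converges as l → ∞ to g(t), the unique fixed point in [−1,1] of x = σ_a²·f(x) + (1−σ_a²)·t, with |g_l − g(t)| ≤ (σ_a²)^l·|t − g(t)|. -/
open Real Set Filter

/-- The dual kernel of the normalized ReLU activation `φ(x) = √2·max(x,0)`. -/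
noncomputable def fDual (x : ℝ) : ℝ :=
  (Real.sqrt (1 - x ^ 2) + (Real.pi - Real.arccos x) * x) / Real.pi

/-- The layerwise conjugate-kernel recursion of a ReLU implicit neural network,
evaluated at the inner product `t`: `g₀ = t`, `g_l = σa²·f(g_{l-1}) + (1-σa²)·t`. -/
noncomputable def ckSeq (σa t : ℝ) : ℕ → ℝ
  | 0 => t
  | l + 1 => σa ^ 2 * fDual (ckSeq σa t l) + (1 - σa ^ 2) * t

/-- Angle-coordinate version of the dual kernel numerator. -/
noncomputable def Gaux (a : ℝ) : ℝ := Real.sin a + (Real.pi - a) * Real.cos a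

lemma Gaux_hasDerivAt (a : ℝ) : HasDerivAt Gaux (-(Real.pi - a) * Real.sin a) a := by
  have h2 : HasDerivAt (fun s : ℝ => (Real.pi - s) * Real.cos s)
      ((-1) * Real.cos a + (Real.pi - a) * (-Real.sin a)) a := by
    have hs : HasDerivAt (fun s : ℝ => Real.pi - s) (-1 : ℝ) a := by
      simpa using (hasDerivAt_id a).const_sub Real.pi
    exact hs.mul (Real.hasDerivAt_cos a)
  have := (Real.hasDerivAt_sin a).add h2
  exact this.congr_deriv (by ring)

lemma Gaux_anti : AntitoneOn Gaux (Icc 0 Real.pi) := by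
  apply antitoneOn_of_deriv_nonpos (convex_Icc _ _)
  · exact fun x _ => ((Gaux_hasDerivAt x).continuousAt).continuousWithinAt
  · exact fun x _ => (Gaux_hasDerivAt x).differentiableAt.differentiableWithinAt
  · intro x hx
    rw [interior_Icc] at hx
    rw [(Gaux_hasDerivAt x).deriv]
    have hs : 0 ≤ Real.sin x := Real.sin_nonneg_of_nonneg_of_le_pi hx.1.le hx.2.le
    nlinarith [hx.2]

lemma Daux_anti : AntitoneOn (fun s => Real.pi * Real.cos s - Gaux s) (Icc 0 Real.pi) := by
  apply antitoneOn_of_deriv_nonpos (convex_Icc _ _)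
  · exact ContinuousOn.sub (by fun_prop) fun x _ =>
      ((Gaux_hasDerivAt x).continuousAt).continuousWithinAt
  · intro x hx
    exact (((Real.hasDerivAt_cos x).const_mul Real.pi).sub
      (Gaux_hasDerivAt x)).differentiableAt.differentiableWithinAt
  · intro x hx
    rw [interior_Icc] at hx
    have h : HasDerivAt (fun s => Real.pi * Real.cos s - Gaux s)
        (Real.pi * (-Real.sin x) - -(Real.pi - x) * Real.sin x) x :=
      ((Real.hasDerivAt_cos x).const_mul Real.pi).sub (Gaux_hasDerivAt x)
    rw [h.deriv]
    have hs : 0 ≤ Real.sin x := Real.sin_nonneg_of_nonneg_of_le_pi hx.1.le hx.2.le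
    nlinarith [hx.1]

lemma fDual_eq (x : ℝ) (hx : x ∈ Icc (-1 : ℝ) 1) :
    fDual x = Gaux (Real.arccos x) / Real.pi := by
  unfold fDual Gaux
  rw [Real.sin_arccos, Real.cos_arccos hx.1 hx.2]

lemma arccos_mem (x : ℝ) : Real.arccos x ∈ Icc 0 Real.pi :=
  ⟨Real.arccos_nonneg x, Real.arccos_le_pi x⟩

/-- `fDual` is monotone and 1-Lipschitz on `[-1,1]`. -/
lemma fDual_mono_lip {x y : ℝ} (hx : x ∈ Icc (-1 : ℝ) 1) (hy : y ∈ Icc (-1 : ℝ) 1)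
    (hxy : x ≤ y) : fDual x ≤ fDual y ∧ fDual y - fDual x ≤ y - x := by
  have hπ : (0 : ℝ) < Real.pi := Real.pi_pos
  have hab : Real.arccos y ≤ Real.arccos x := by
    rcases eq_or_lt_of_le hxy with h | h
    · simp [h]
    · exact (Real.strictAntiOn_arccos hx hy h).le
  have h1 := Gaux_anti (arccos_mem y) (arccos_mem x) hab
  have h2 := Daux_anti (arccos_mem y) (arccos_mem x) hab
  simp only at h2
  rw [Real.cos_arccos hx.1 hx.2, Real.cos_arccos hy.1 hy.2] at h2
  rw [fDual_eq x hx, fDual_eq y hy]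
  constructor
  · exact div_le_div_of_nonneg_right h1 hπ.le
  · rw [div_sub_div_same, div_le_iff₀ hπ]
    nlinarith

lemma fDual_le_fDual {x y : ℝ} (hx : x ∈ Icc (-1 : ℝ) 1) (hy : y ∈ Icc (-1 : ℝ) 1)
    (hxy : x ≤ y) : fDual x ≤ fDual y := (fDual_mono_lip hx hy hxy).1

lemma fDual_abs_le {x y : ℝ} (hx : x ∈ Icc (-1 : ℝ) 1) (hy : y ∈ Icc (-1 : ℝ) 1) :
    |fDual x - fDual y| ≤ |x - y| := by
  rcases le_total x y with h | h
  · obtain ⟨h1, h2⟩ := fDual_mono_lip hx hy h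
    rw [abs_sub_comm, abs_sub_comm x y, abs_of_nonneg (by linarith), abs_of_nonneg (by linarith)]
    linarith
  · obtain ⟨h1, h2⟩ := fDual_mono_lip hy hx h
    rw [abs_of_nonneg (by linarith), abs_of_nonneg (by linarith)]
    linarith

lemma fDual_neg_one : fDual (-1) = 0 := by
  unfold fDual
  rw [Real.arccos_neg_one]
  norm_num

lemma fDual_one : fDual 1 = 1 := by
  unfold fDual
  rw [Real.arccos_one]
  norm_num

lemma fDual_mem {x : ℝ} (hx : x ∈ Icc (-1 : ℝ) 1) : fDual x ∈ Icc (0 : ℝ) 1 := by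
  constructor
  · have := fDual_le_fDual (left_mem_Icc.mpr (by norm_num)) hx hx.1
    rwa [fDual_neg_one] at this
  · have := fDual_le_fDual hx (right_mem_Icc.mpr (by norm_num)) hx.2
    rwa [fDual_one] at this

theorem stmt_5 (σa : ℝ) (hσ0 : 0 < σa ^ 2) (hσ1 : σa ^ 2 < 1)
    (t : ℝ) (ht : t ∈ Set.Icc (-1 : ℝ) 1) :
    (∃! x : ℝ, x ∈ Set.Icc (-1 : ℝ) 1 ∧ x = σa ^ 2 * fDual x + (1 - σa ^ 2) * t) ∧
    (∀ gt : ℝ, gt ∈ Set.Icc (-1 : ℝ) 1 →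
      gt = σa ^ 2 * fDual gt + (1 - σa ^ 2) * t →
      Tendsto (ckSeq σa t) atTop (nhds gt) ∧
      ∀ l : ℕ, |ckSeq σa t l - gt| ≤ (σa ^ 2) ^ l * |t - gt|) := by
  set σ := σa ^ 2 with hσdef
  -- invariance of the iteration map
  have hinv : ∀ x ∈ Icc (-1 : ℝ) 1, σ * fDual x + (1 - σ) * t ∈ Icc (-1 : ℝ) 1 := by
    intro x hx
    obtain ⟨hf0, hf1⟩ := fDual_mem hx
    constructor
    · nlinarith [ht.1, ht.2]
    · nlinarith [ht.1, ht.2]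
  -- contraction estimate
  have hcontr : ∀ x ∈ Icc (-1 : ℝ) 1, ∀ y ∈ Icc (-1 : ℝ) 1,
      |(σ * fDual x + (1 - σ) * t) - (σ * fDual y + (1 - σ) * t)| ≤ σ * |x - y| := by
    intro x hx y hy
    have : (σ * fDual x + (1 - σ) * t) - (σ * fDual y + (1 - σ) * t)
        = σ * (fDual x - fDual y) := by ring
    rw [this, abs_mul, abs_of_pos hσ0]
    exact mul_le_mul_of_nonneg_left (fDual_abs_le hx hy) hσ0.le
  -- existence of a fixed point via Banach fixed point theorem on the subtype
  haveI : Nonempty (Icc (-1 : ℝ) 1) := ⟨⟨0, by norm_num⟩⟩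
  set F' : Icc (-1 : ℝ) 1 → Icc (-1 : ℝ) 1 :=
    fun x => ⟨σ * fDual x.1 + (1 - σ) * t, hinv x.1 x.2⟩ with hF'
  have hK : ContractingWith ⟨σ, hσ0.le⟩ F' := by
    constructor
    · exact_mod_cast hσ1
    · apply LipschitzWith.of_dist_le_mul
      intro x y
      simp only [Subtype.dist_eq, Real.dist_eq, hF']
      exact hcontr x.1 x.2 y.1 y.2
  obtain ⟨x₀, hx₀⟩ := ContractingWith.exists_fixedPoint hK
    ⟨0, by norm_num⟩ (edist_ne_top _ _)
  have hx₀fix : (x₀ : ℝ) = σ * fDual x₀ + (1 - σ) * t := by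
    have := hx₀.1
    unfold Function.IsFixedPt at this
    have := congrArg Subtype.val this
    simp only [hF'] at this
    linarith [this]
  -- uniqueness of fixed points in Icc
  have huniq : ∀ y ∈ Icc (-1 : ℝ) 1, y = σ * fDual y + (1 - σ) * t →
      ∀ z ∈ Icc (-1 : ℝ) 1, z = σ * fDual z + (1 - σ) * t → y = z := by
    intro y hy hyfix z hz hzfix
    have h := hcontr y hy z hz
    rw [← hyfix, ← hzfix] at h
    have : |y - z| = 0 := by nlinarith [abs_nonneg (y - z)]
    have := abs_eq_zero.mp this
    linarith
  constructor
  · exact ⟨x₀, ⟨x₀.2, hx₀fix⟩, fun y hy => huniq y hy.1 hy.2 x₀ x₀.2 hx₀fix⟩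
  · intro gt hgt hgtfix
    -- membership of the sequence
    have hmem : ∀ l, ckSeq σa t l ∈ Icc (-1 : ℝ) 1 := by
      intro l
      induction l with
      | zero => exact ht
      | succ n ih => exact hinv _ ih
    -- the geometric bound
    have hbound : ∀ l : ℕ, |ckSeq σa t l - gt| ≤ σ ^ l * |t - gt| := by
      intro l
      induction l with
      | zero => simp [ckSeq]
      | succ n ih =>
        have step : |ckSeq σa t (n + 1) - gt| ≤ σ * |ckSeq σa t n - gt| := by
          have := hcontr (ckSeq σa t n) (hmem n) gt hgt
          rw [← hgtfix] at this
          simpa [ckSeq] using this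
        calc |ckSeq σa t (n + 1) - gt| ≤ σ * |ckSeq σa t n - gt| := step
          _ ≤ σ * (σ ^ n * |t - gt|) := mul_le_mul_of_nonneg_left ih hσ0.le
          _ = σ ^ (n + 1) * |t - gt| := by ring
    refine ⟨?_, hbound⟩
    -- convergence by squeezing
    have hgeo : Tendsto (fun l : ℕ => σ ^ l * |t - gt|) atTop (nhds 0) := by
      have := tendsto_pow_atTop_nhds_zero_of_lt_one hσ0.le hσ1
      simpa using this.mul_const |t - gt|
    rw [tendsto_iff_dist_tendsto_zero]
    apply squeeze_zero (fun l => dist_nonneg) (fun l => ?_) hgeo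
    rw [Real.dist_eq]
    exact hbound l
end

section
/- Fix σ_a ∈ ℝ with 0 < σ_a² < 1, let f(x) = (√(1−x²) + (π − arccos x)·x)/π, let g : [−1,1] → [−1,1] send t to the unique fixed point of x = σ_a²·f(x) + (1−σ_a²)·t, and set ∠* = g(0). Then g is twice differentiable at 0 with g″(0) = σ_a²·(1−σ_a²)²·f″(∠*) / (1 − σ_a²·f′(∠*))³, where f′(x) = (π − arccos x)/π and f″(x) = 1/(π·√(1−x²)). -/
open Real Set

/-- The derivative `f′(x) = (π − arccos x)/π` of the dual kernel. -/
noncomputable def fDual' (x : ℝ) : ℝ := (Real.pi - Real.arccos x) / Real.pi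

/-- The second derivative `f″(x) = 1/(π·√(1−x²))` of the dual kernel. -/
noncomputable def fDual'' (x : ℝ) : ℝ := 1 / (Real.pi * Real.sqrt (1 - x ^ 2))

open Filter Topology


lemma sq_lt_one' {x : ℝ} (hx : x ∈ Ioo (-1:ℝ) 1) : 0 < 1 - x ^ 2 := by
  nlinarith [hx.1, hx.2]

lemma fDual_hasStrictDerivAt {x : ℝ} (hx : x ∈ Ioo (-1:ℝ) 1) :
    HasStrictDerivAt fDual (fDual' x) x := by
  have h1 : x ≠ -1 := ne_of_gt hx.1
  have h2 : x ≠ 1 := ne_of_lt hx.2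
  have hs : 0 < 1 - x ^ 2 := sq_lt_one' hx
  have hsq : Real.sqrt (1 - x ^ 2) ≠ 0 := ne_of_gt (Real.sqrt_pos.2 hs)
  have hsqrt : HasStrictDerivAt (fun y : ℝ => Real.sqrt (1 - y ^ 2))
      (-x / Real.sqrt (1 - x ^ 2)) x := by
    have hinner : HasStrictDerivAt (fun y : ℝ => 1 - y ^ 2) (-(2 * x)) x := by
      simpa using ((hasStrictDerivAt_pow 2 x).const_sub 1)
    have := (Real.hasStrictDerivAt_sqrt (ne_of_gt hs)).comp x hinner
    refine this.congr_deriv (Eq.symm ?_)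
    field_simp
  have harc : HasStrictDerivAt (fun y : ℝ => (Real.pi - Real.arccos y) * y)
      ((1 / Real.sqrt (1 - x ^ 2)) * x + (Real.pi - Real.arccos x)) x := by
    have h := ((Real.hasStrictDerivAt_arccos h1 h2).const_sub Real.pi).fun_mul
      (hasStrictDerivAt_id x)
    simpa using h
  have := (hsqrt.add harc).div_const Real.pi
  refine this.congr_deriv (Eq.symm ?_)
  unfold fDual'
  have hs2 : Real.sqrt (1 - x ^ 2) * Real.sqrt (1 - x ^ 2) = 1 - x ^ 2 :=
    Real.mul_self_sqrt hs.le
  field_simp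
  ring

lemma fDual'_hasDerivAt {x : ℝ} (hx : x ∈ Ioo (-1:ℝ) 1) :
    HasDerivAt fDual' (fDual'' x) x := by
  have h1 : x ≠ -1 := ne_of_gt hx.1
  have h2 : x ≠ 1 := ne_of_lt hx.2
  have h := ((Real.hasDerivAt_arccos h1 h2).const_sub Real.pi).div_const Real.pi
  refine h.congr_deriv (Eq.symm ?_)
  unfold fDual''
  field_simp

lemma fDual'_mem (x : ℝ) : fDual' x ∈ Icc (0:ℝ) 1 := by
  have h1 := Real.arccos_nonneg x
  have h2 := Real.arccos_le_pi x
  have hpi := Real.pi_pos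
  unfold fDual'
  constructor
  · apply div_nonneg (by linarith) (by linarith)
  · rw [div_le_one hpi]; linarith

lemma fDual_continuous : Continuous fDual := by
  unfold fDual
  exact ((Real.continuous_sqrt.comp (by fun_prop)).add
    ((continuous_const.sub Real.continuous_arccos).mul continuous_id)).div_const _

theorem stmt_9 (σa : ℝ) (hσ0 : 0 < σa ^ 2) (hσ1 : σa ^ 2 < 1)
    (g : ℝ → ℝ)
    (hg : ∀ t ∈ Set.Icc (-1 : ℝ) 1,
      g t ∈ Set.Icc (-1 : ℝ) 1 ∧ g t = σa ^ 2 * fDual (g t) + (1 - σa ^ 2) * t) :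
    HasDerivAt (deriv g)
      (σa ^ 2 * (1 - σa ^ 2) ^ 2 * fDual'' (g 0) / (1 - σa ^ 2 * fDual' (g 0)) ^ 3)
      0 := by
  set c : ℝ := 1 - σa ^ 2 with hc
  have hcpos : 0 < c := by rw [hc]; linarith
  set F : ℝ → ℝ := fun x => x - σa ^ 2 * fDual x with hF
  -- positivity of 1 - σ² fDual'
  have hpos : ∀ x : ℝ, 0 < 1 - σa ^ 2 * fDual' x := by
    intro x
    obtain ⟨h0, h1⟩ := fDual'_mem x
    nlinarith
  -- the fixed point at 0
  obtain ⟨hx₀mem, hx₀eq⟩ := hg 0 (by norm_num)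
  have hfix : g 0 = σa ^ 2 * fDual (g 0) := by simpa using hx₀eq
  have hx₀Ioo : g 0 ∈ Ioo (-1 : ℝ) 1 := by
    rcases hx₀mem with ⟨hl, hr⟩
    constructor
    · rcases lt_or_eq_of_le hl with h | h
      · exact h
      · exfalso
        have : fDual (g 0) = 0 := by
          rw [← h]
          unfold fDual
          rw [Real.arccos_neg_one]
          norm_num
        rw [this] at hfix
        rw [← h] at hfix
        norm_num at hfix
    · rcases lt_or_eq_of_le hr with h | h
      · exact h
      · exfalso
        have : fDual (g 0) = 1 := by
          rw [h]
          unfold fDual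
          rw [Real.arccos_one]
          field_simp
          simp
        rw [this] at hfix
        rw [h] at hfix
        nlinarith
  have hFx₀ : F (g 0) = 0 := by simp only [hF]; linarith
  -- strict monotonicity of F on Icc
  have hmono : StrictMonoOn F (Icc (-1 : ℝ) 1) := by
    apply strictMonoOn_of_deriv_pos (convex_Icc _ _)
    · exact ((continuous_id.sub (continuous_const.mul fDual_continuous))).continuousOn
    · intro x hx
      rw [interior_Icc] at hx
      have hdx : HasDerivAt F (1 - σa ^ 2 * fDual' x) x :=
        (hasDerivAt_id x).sub
          (((fDual_hasStrictDerivAt hx).hasDerivAt).const_mul (σa ^ 2))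
      rw [hdx.deriv]
      exact hpos x
  -- local inverse of F at g 0
  have hF0 : HasStrictDerivAt F (1 - σa ^ 2 * fDual' (g 0)) (g 0) :=
    (hasStrictDerivAt_id (g 0)).sub
      ((fDual_hasStrictDerivAt hx₀Ioo).const_mul (σa ^ 2))
  have hne : (1 - σa ^ 2 * fDual' (g 0)) ≠ 0 := ne_of_gt (hpos _)
  set e : OpenPartialHomeomorph ℝ ℝ :=
    (hF0.hasStrictFDerivAt_equiv hne).toOpenPartialHomeomorph F with he
  have hecoe : (e : ℝ → ℝ) = F :=
    (hF0.hasStrictFDerivAt_equiv hne).toOpenPartialHomeomorph_coe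
  have hsrc : g 0 ∈ e.source :=
    (hF0.hasStrictFDerivAt_equiv hne).mem_toOpenPartialHomeomorph_source
  have h0tgt : (0 : ℝ) ∈ e.target := by
    have := (hF0.hasStrictFDerivAt_equiv hne).image_mem_toOpenPartialHomeomorph_target
    rwa [hFx₀] at this
  have hFinv0 : e.symm 0 = g 0 := by
    have h1 := e.left_inv hsrc
    rw [hecoe, hFx₀] at h1
    exact h1
  -- eventual facts about e.symm near 0
  have hmemT : ∀ᶠ y in 𝓝 (0 : ℝ), y ∈ e.target :=
    e.open_target.mem_nhds h0tgt
  have hIoo : ∀ᶠ y in 𝓝 (0 : ℝ), e.symm y ∈ Ioo (-1 : ℝ) 1 := by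
    have hcont : ContinuousAt e.symm 0 := e.continuousAt_symm h0tgt
    have : Ioo (-1 : ℝ) 1 ∈ 𝓝 (e.symm 0) := by
      rw [hFinv0]; exact isOpen_Ioo.mem_nhds hx₀Ioo
    exact hcont.eventually_mem this
  have hrinv : ∀ᶠ y in 𝓝 (0 : ℝ), F (e.symm y) = y := by
    filter_upwards [hmemT] with y hy
    rw [← hecoe]; exact e.right_inv hy
  have hderInv : ∀ᶠ y in 𝓝 (0 : ℝ),
      HasDerivAt (⇑e.symm) ((1 - σa ^ 2 * fDual' (e.symm y))⁻¹) y := by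
    filter_upwards [hmemT, hIoo] with y hyT hyI
    refine HasDerivAt.of_local_left_inverse (f := F) (e.continuousAt_symm hyT) ?_ (ne_of_gt (hpos _)) ?_
    · exact (hasDerivAt_id _).sub
        (((fDual_hasStrictDerivAt hyI).hasDerivAt).const_mul (σa ^ 2))
    · filter_upwards [e.open_target.mem_nhds hyT] with z hz
      rw [← hecoe]; exact e.right_inv hz
  -- the nice local form h of g
  set h : ℝ → ℝ := fun t => e.symm (c * t) with hh
  have hct : Tendsto (fun t : ℝ => c * t) (𝓝 0) (𝓝 0) := by
    exact (continuous_mul_left c).tendsto' 0 0 (by simp)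
  have hh0 : h 0 = g 0 := by simp [hh, hFinv0]
  have heqg : ∀ᶠ t in 𝓝 (0 : ℝ), g t = h t := by
    have hIooT : ∀ᶠ t in 𝓝 (0 : ℝ), t ∈ Ioo (-1 : ℝ) 1 :=
      isOpen_Ioo.mem_nhds (by norm_num)
    filter_upwards [hIooT, hct.eventually hrinv, hct.eventually hIoo] with t ht hFr hIm
    obtain ⟨hgmem, hgeq⟩ := hg t (Ioo_subset_Icc_self ht)
    have hFg : F (g t) = c * t := by simp only [hF]; linarith
    have hFh : F (h t) = c * t := hFr
    exact hmono.injOn hgmem (Ioo_subset_Icc_self hIm) (by rw [hFg, hFh])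
  -- h has an explicit derivative eventually near 0
  have hDh : ∀ᶠ t in 𝓝 (0 : ℝ),
      HasDerivAt h ((1 - σa ^ 2 * fDual' (h t))⁻¹ * c) t := by
    filter_upwards [hct.eventually hderInv] with t hdt
    have hlin : HasDerivAt (fun t : ℝ => c * t) c t := by
      simpa using (hasDerivAt_id t).const_mul c
    exact HasDerivAt.comp t hdt hlin
  -- deriv g agrees with the explicit formula near 0
  set D : ℝ → ℝ := fun t => (1 - σa ^ 2 * fDual' (h t))⁻¹ * c with hD
  have hderivg : deriv g =ᶠ[𝓝 (0 : ℝ)] D := by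
    obtain ⟨U, hUsub, hUopen, hU0⟩ := mem_nhds_iff.mp heqg
    filter_upwards [hUopen.mem_nhds hU0, hDh] with t htU hdt
    have heq : g =ᶠ[𝓝 t] h :=
      eventually_of_mem (hUopen.mem_nhds htU) (fun z hz => hUsub hz)
    rw [heq.deriv_eq, hdt.deriv]
  -- D has the right derivative at 0
  have hh0' : HasDerivAt h ((1 - σa ^ 2 * fDual' (g 0))⁻¹ * c) 0 := by
    have := hDh.self_of_nhds
    rwa [hh0] at this
  have hinner : HasDerivAt (fun t => 1 - σa ^ 2 * fDual' (h t))
      (-(σa ^ 2 * (fDual'' (g 0) * ((1 - σa ^ 2 * fDual' (g 0))⁻¹ * c)))) 0 := by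
    have hcomp : HasDerivAt (fun t => fDual' (h t))
        (fDual'' (g 0) * ((1 - σa ^ 2 * fDual' (g 0))⁻¹ * c)) 0 := by
      have hfd : HasDerivAt fDual' (fDual'' (g 0)) (h 0) := by
        rw [hh0]; exact fDual'_hasDerivAt hx₀Ioo
      exact HasDerivAt.comp 0 hfd hh0'
    exact (hcomp.const_mul (σa ^ 2)).const_sub 1
  have hne0 : (1 - σa ^ 2 * fDual' (h 0)) ≠ 0 := by rw [hh0]; exact hne
  have hDder : HasDerivAt D
      (σa ^ 2 * (1 - σa ^ 2) ^ 2 * fDual'' (g 0) / (1 - σa ^ 2 * fDual' (g 0)) ^ 3) 0 := by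
    have := (hinner.inv hne0).mul_const c
    refine this.congr_deriv (Eq.symm ?_)
    rw [hh0]
    field_simp
    ring
  exact hDder.congr_of_eventuallyEq hderivg
end
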